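/- arXiv:2103.13160 — 3 statements merged into one kernel-verified Lean document; each statement's English description precedes it below -/
import Mathlib

section
/- Let a, β₀, A, μ, r be positive reals and set R₀ = β₀A/(μ + r/a), φ₀ = 1 - (aβ₀ - √r)²/(aμ + r), and Δ = (aβ₀ + A - μ/β₀)² - 4r. If aβ₀ + A - μ/β₀ > 0, then Δ > 0 if and only if R₀ > φ₀ or aβ₀ + A - μ/β₀ < -2√r; in particular under aβ₀ + A - μ/β₀ > 0, Δ > 0 iff R₀ > φ₀. -/
theorem stmt_1 (a β₀ A μ r : ℝ) (ha : 0 < a) (hb : 0 < β₀) (hA : 0 < A)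
    (hμ : 0 < μ) (hr : 0 < r)
    (R₀ : ℝ) (hR₀ : R₀ = β₀ * A / (μ + r / a))
    (φ₀ : ℝ) (hφ₀ : φ₀ = 1 - (a * β₀ - Real.sqrt r) ^ 2 / (a * μ + r))
    (Δ : ℝ) (hΔ : Δ = (a * β₀ + A - μ / β₀) ^ 2 - 4 * r)
    (hpos : a * β₀ + A - μ / β₀ > 0) :
    (Δ > 0 ↔ (R₀ > φ₀ ∨ a * β₀ + A - μ / β₀ < -2 * Real.sqrt r)) ∧
      (Δ > 0 ↔ R₀ > φ₀) := by
  set s := Real.sqrt r with hs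
  have hs0 : 0 < s := Real.sqrt_pos.mpr hr
  have hs2 : s ^ 2 = r := Real.sq_sqrt hr.le
  have hden : 0 < a * μ + r := by positivity
  have hden2 : μ + r / a ≠ 0 := by positivity
  have hkey : R₀ - φ₀ = a * β₀ * ((a * β₀ + A - μ / β₀) - 2 * s) / (a * μ + r) := by
    rw [hR₀, hφ₀, ← hs2]
    field_simp
    ring
  have h1 : R₀ > φ₀ ↔ a * β₀ + A - μ / β₀ > 2 * s := by
    rw [gt_iff_lt, ← sub_pos, hkey]
    constructor
    · intro h
      have h'' : 0 < a * β₀ * ((a * β₀ + A - μ / β₀) - 2 * s) := by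
        have := mul_pos h hden
        rwa [div_mul_cancel₀ _ hden.ne'] at this
      nlinarith [mul_pos ha hb]
    · intro h
      have : 0 < a * β₀ * ((a * β₀ + A - μ / β₀) - 2 * s) := by
        nlinarith [mul_pos ha hb]
      positivity
  have h2 : Δ > 0 ↔ a * β₀ + A - μ / β₀ > 2 * s := by
    rw [hΔ]
    constructor
    · intro h
      nlinarith
    · intro h
      nlinarith
  refine ⟨?_, h2.trans h1.symm⟩
  rw [h2, h1]
  constructor
  · exact Or.inl
  · rintro (h | h)
    · exact h
    · nlinarith
end

section
/- Let a, β₀, A, μ, r > 0 with Δ = (aβ₀ + A - μ/β₀)² - 4r > 0, and let I₃ = (A - S₃)/β₀ where S₃ = (aβ₀ + A + μ/β₀ - √Δ)/2. Suppose A - aβ₀ - μ/β₀ > √Δ (so that I₃ > 0). Then (a + I₃)² > r/β₀². -/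
theorem stmt_10 (a β₀ A μ r : ℝ) (ha : 0 < a) (hb : 0 < β₀) (hA : 0 < A)
    (hμ : 0 < μ) (hr : 0 < r)
    (Δ : ℝ) (hΔ : Δ = (a * β₀ + A - μ / β₀) ^ 2 - 4 * r) (hΔ0 : 0 < Δ)
    (S₃ I₃ : ℝ) (hS₃ : S₃ = (a * β₀ + A + μ / β₀ - Real.sqrt Δ) / 2)
    (hI₃ : I₃ = (A - S₃) / β₀)
    (hpos : A - a * β₀ - μ / β₀ > Real.sqrt Δ) :
    (a + I₃) ^ 2 > r / β₀ ^ 2 := by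
  have hs : Real.sqrt Δ ^ 2 = Δ := Real.sq_sqrt hΔ0.le
  have hsnn : 0 ≤ Real.sqrt Δ := Real.sqrt_nonneg Δ
  have hb2 : (0:ℝ) < β₀ ^ 2 := by positivity
  have key : (a + I₃) * β₀ = (a * β₀ + A - μ / β₀ + Real.sqrt Δ) / 2 := by
    subst hI₃ hS₃; field_simp; ring
  have hx : 0 < a * β₀ + A - μ / β₀ := by nlinarith [mul_pos ha hb]
  rw [gt_iff_lt, div_lt_iff₀ hb2]
  nlinarith [mul_pos hx (Real.sqrt_pos.mpr hΔ0)]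
end

section
/- Let a, β₀, A, μ, r > 0 with Δ = (aβ₀ + A - μ/β₀)² - 4r > 0 and aβ₀ + A - μ/β₀ > 0. Let I₄ = (A - S₄)/β₀ where S₄ = (aβ₀ + A + μ/β₀ + √Δ)/2, so a + I₄ = (aβ₀ + A - μ/β₀ - √Δ)/(2β₀). If a + I₄ > 0, then β₀² < r/(a + I₄)². -/
theorem stmt_11 (a β₀ A μ r : ℝ) (ha : 0 < a) (hb : 0 < β₀) (hA : 0 < A)
    (hμ : 0 < μ) (hr : 0 < r)
    (Δ : ℝ) (hΔ : Δ = (a * β₀ + A - μ / β₀) ^ 2 - 4 * r) (hΔ0 : 0 < Δ)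
    (hpos : a * β₀ + A - μ / β₀ > 0)
    (S₄ I₄ : ℝ) (hS₄ : S₄ = (a * β₀ + A + μ / β₀ + Real.sqrt Δ) / 2)
    (hI₄ : I₄ = (A - S₄) / β₀)
    (haI : 0 < a + I₄) :
    β₀ ^ 2 < r / (a + I₄) ^ 2 := by
  set s := Real.sqrt Δ with hs
  have hs0 : 0 < s := Real.sqrt_pos.mpr hΔ0
  have hs2 : s ^ 2 = Δ := Real.sq_sqrt hΔ0.le
  have hbne : β₀ ≠ 0 := hb.ne'
  have hkey : β₀ * (a + I₄) = (a * β₀ + A - μ / β₀ - s) / 2 := by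
    rw [hI₄, hS₄]; field_simp; ring
  have hmu : μ / β₀ > 0 := div_pos hμ hb
  have h1 : (β₀ * (a + I₄)) ^ 2 < r := by
    rw [hkey]
    nlinarith [hs2, hΔ, Real.sqrt_nonneg Δ, sq_nonneg (a * β₀ + A - μ / β₀ + s)]
  rw [lt_div_iff₀ (by positivity)]
  nlinarith [h1]
end
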